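/- Let V be a 4k-dimensional real inner product space and (W, Q') any finite-dimensional real quadratic space. Then the map of the previous statement induces an algebra isomorphism from the Clifford algebra C(V ⊕ W, Q ⊥ Q') to the ordinary (ungraded) tensor product C(V) ⊗ C(W). -/

import Mathlib

open CliffordAlgebra
open scoped TensorProduct

section aux

variable {M : Type*} [AddCommGroup M] [Module ℝ M] (Q : QuadraticForm ℝ M)

lemma aux_L1 (l : List M) (v : M) (h : ∀ x ∈ l, Q.IsOrtho x v) :
    ι Q v * (l.map (ι Q)).prod = (-1 : ℤ) ^ l.length • ((l.map (ι Q)).prod * ι Q v) := by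
  induction l with
  | nil => simp
  | cons x t ih =>
    have hx : Q.IsOrtho v x := (h x (by simp)).symm
    simp only [List.map_cons, List.prod_cons, List.length_cons]
    rw [← mul_assoc, ι_mul_ι_comm_of_isOrtho hx, neg_mul, mul_assoc,
      ih (fun y hy => h y (by simp [hy]))]
    rw [mul_smul_comm, ← mul_assoc, pow_succ]
    simp [smul_smul, mul_comm]

lemma aux_L2 (l : List M) (hl : l.Pairwise Q.IsOrtho) (h1 : ∀ x ∈ l, Q x = 1)
    (v : M) (hv : v ∈ l) :
    ι Q v * (l.map (ι Q)).prod = (-1 : ℤ) ^ (l.length - 1) • ((l.map (ι Q)).prod * ι Q v) := by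
  induction l with
  | nil => simp at hv
  | cons x t ih =>
    simp only [List.map_cons, List.prod_cons, List.length_cons, Nat.add_sub_cancel]
    obtain rfl | hvt := List.mem_cons.mp hv
    · -- v = x
      have hTx : (t.map (ι Q)).prod * ι Q v = (-1:ℤ)^t.length • (ι Q v * (t.map (ι Q)).prod) := by
        have := aux_L1 Q t v (fun y hy => ((List.pairwise_cons.mp hl).1 y hy).symm)
        rw [this, smul_smul, ← pow_add, ← two_mul, pow_mul]
        simp
      rw [← mul_assoc, ι_sq_scalar, h1 v (by simp), map_one, one_mul, mul_assoc, hTx,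
        mul_smul_comm, ← mul_assoc, ι_sq_scalar, h1 v (by simp), map_one, one_mul,
        smul_smul, ← pow_add, ← two_mul, pow_mul]
      simp
    · -- v ∈ t
      have ht : t ≠ [] := List.ne_nil_of_mem hvt
      have hlen : t.length - 1 + 1 = t.length := by
        have := List.length_pos_iff.mpr ht; omega
      have hx : Q.IsOrtho v x := ((List.pairwise_cons.mp hl).1 v hvt).symm
      rw [← mul_assoc, ι_mul_ι_comm_of_isOrtho hx, neg_mul, mul_assoc,
        ih (List.pairwise_cons.mp hl).2 (fun y hy => h1 y (by simp [hy])) hvt,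
        mul_smul_comm, ← mul_assoc, ← neg_smul, ← hlen, pow_succ]
      have h2 : 1 + (t.length - 1) - 1 = t.length - 1 := by omega
      ring_nf
      rw [h2]

lemma aux_L3 (l : List M) (hl : l.Pairwise Q.IsOrtho) (h1 : ∀ x ∈ l, Q x = 1) :
    (l.map (ι Q)).prod * (l.map (ι Q)).prod = (-1 : ℤ) ^ (l.length.choose 2) • 1 := by
  induction l with
  | nil => simp
  | cons x t ih =>
    simp only [List.map_cons, List.prod_cons, List.length_cons]
    have hTx : (t.map (ι Q)).prod * ι Q x = (-1:ℤ)^t.length • (ι Q x * (t.map (ι Q)).prod) := by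
      have := aux_L1 Q t x (fun y hy => ((List.pairwise_cons.mp hl).1 y hy).symm)
      rw [this, smul_smul, ← pow_add, ← two_mul, pow_mul]
      simp
    calc ι Q x * (t.map (ι Q)).prod * (ι Q x * (t.map (ι Q)).prod)
        = ι Q x * ((t.map (ι Q)).prod * ι Q x) * (t.map (ι Q)).prod := by
          simp only [mul_assoc]
      _ = (-1:ℤ)^t.length • (ι Q x * ι Q x * ((t.map (ι Q)).prod * (t.map (ι Q)).prod)) := by
          rw [hTx]; simp only [mul_smul_comm, smul_mul_assoc, mul_assoc]
      _ = (-1:ℤ)^t.length • ((t.map (ι Q)).prod * (t.map (ι Q)).prod) := by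
          rw [ι_sq_scalar, h1 x (by simp), map_one, one_mul]
      _ = (-1:ℤ)^(t.length + 1).choose 2 • 1 := by
          rw [ih (List.pairwise_cons.mp hl).2 (fun y hy => h1 y (by simp [hy])),
            smul_smul, ← pow_add]
          congr 1
          rw [Nat.choose_succ_succ, Nat.choose_one_right, add_comm]

end aux

set_option maxHeartbeats 1000000 in
set_option synthInstance.maxHeartbeats 200000 in
theorem stmt5 (V : Type) [NormedAddCommGroup V] [InnerProductSpace ℝ V]
    [FiniteDimensional ℝ V] {n : ℕ} (hn : n = Module.finrank ℝ V) (h4 : n % 4 = 0)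
    (e : OrthonormalBasis (Fin n) ℝ V)
    (Q : QuadraticForm ℝ V) (hQ : ∀ v, Q v = inner ℝ v v)
    (W : Type) [AddCommGroup W] [Module ℝ W] [Module.Finite ℝ W]
    (Q' : QuadraticForm ℝ W)
    (ε : CliffordAlgebra Q) (hε : ε = (List.ofFn fun i : Fin n => ι Q (e i)).prod) :
    ∃ f : CliffordAlgebra (Q.prod Q') ≃ₐ[ℝ] CliffordAlgebra Q ⊗[ℝ] CliffordAlgebra Q',
      ∀ (v : V) (w : W),
        f (ι (Q.prod Q') (v, w)) = ι Q v ⊗ₜ[ℝ] (1 : CliffordAlgebra Q') + ε ⊗ₜ[ℝ] ι Q' w := by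
  -- basic facts about the orthonormal basis
  have hQe : ∀ i, Q (e i) = 1 := by
    intro i
    rw [hQ, real_inner_self_eq_norm_sq, e.orthonormal.1 i]; norm_num
  have hortho : ∀ i j : Fin n, i ≠ j → Q.IsOrtho (e i) (e j) := by
    intro i j hij
    rw [QuadraticMap.isOrtho_def, hQ, hQ, hQ, inner_add_add_self,
      e.orthonormal.2 hij, e.orthonormal.2 hij.symm]
    ring
  -- the list of basis vectors
  set L : List V := List.ofFn e with hL
  have hLmap : L.map (ι Q) = List.ofFn fun i : Fin n => ι Q (e i) := by
    rw [hL, List.map_ofFn]; rfl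
  have hLlen : L.length = n := by simp [hL]
  have hLpair : L.Pairwise Q.IsOrtho := by
    rw [hL, List.pairwise_ofFn]
    exact fun i j hij => hortho i j (Fin.ne_of_lt hij)
  have hL1 : ∀ x ∈ L, Q x = 1 := by
    intro x hx
    rw [hL, List.mem_ofFn] at hx
    obtain ⟨i, rfl⟩ := hx
    exact hQe i
  have hεL : ε = (L.map (ι Q)).prod := by rw [hLmap, hε]
  -- ε squared is one
  have hchoose : Even (n.choose 2) := by
    obtain ⟨k, rfl⟩ : ∃ k, n = 4 * k := ⟨n / 4, by omega⟩
    rw [Nat.choose_two_right]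
    have h1 : 4 * k * (4 * k - 1) = 2 * (2 * (k * (4 * k - 1))) := by ring
    rw [h1, Nat.mul_div_cancel_left _ (by norm_num)]
    exact even_two_mul _
  have hε2 : ε * ε = 1 := by
    rw [hεL, aux_L3 Q L hLpair hL1, hLlen, hchoose.neg_one_pow, one_smul]
  -- ι v anticommutes with ε
  have hanti : ∀ v : V, ι Q v * ε = -(ε * ι Q v) := by
    have : (LinearMap.mulRight ℝ ε).comp (ι Q)
        = -((LinearMap.mulLeft ℝ ε).comp (ι Q)) := by
      apply e.toBasis.ext
      intro i
      simp only [LinearMap.comp_apply, LinearMap.neg_apply, LinearMap.mulRight_apply,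
        LinearMap.mulLeft_apply, OrthonormalBasis.coe_toBasis]
      have hodd : Odd (L.length - 1) := by
        have : (0:ℕ) < n := i.pos
        rw [hLlen, Nat.odd_iff]; omega
      rw [hεL, aux_L2 Q L hLpair hL1 (e i) (by rw [hL]; exact List.mem_ofFn.mpr ⟨i, rfl⟩),
        hodd.neg_one_pow, neg_one_smul]
    intro v
    have := congrFun (congrArg DFunLike.coe this) v
    simpa using this
  -- the product-space epsilon
  set QP : QuadraticForm ℝ (V × W) := Q.prod Q' with hQP
  set L' : List (V × W) := List.ofFn (fun i : Fin n => ((e i : V), (0 : W))) with hL'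
  set ε' : CliffordAlgebra QP := (L'.map (ι QP)).prod with hε'
  have hL'len : L'.length = n := by simp [hL']
  have hQPapply : ∀ (v : V) (w : W), QP (v, w) = Q v + Q' w := by
    intro v w; simp [hQP]
  have hL'pair : L'.Pairwise QP.IsOrtho := by
    rw [hL', List.pairwise_ofFn]
    intro i j hij
    rw [QuadraticMap.isOrtho_def]
    have := (hortho i j (Fin.ne_of_lt hij))
    rw [QuadraticMap.isOrtho_def] at this
    simpa [hQPapply, Prod.mk_add_mk] using this
  have hL'1 : ∀ x ∈ L', QP x = 1 := by
    intro x hx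
    rw [hL'] at hx
    obtain ⟨i, rfl⟩ := List.mem_ofFn.mp hx
    simpa [hQPapply] using hQe i
  have hε'2 : ε' * ε' = 1 := by
    rw [hε', aux_L3 QP L' hL'pair hL'1, hL'len, hchoose.neg_one_pow, one_smul]
  -- (v, 0) anticommutes with ε'
  have hanti' : ∀ v : V, ι QP (v, 0) * ε' = -(ε' * ι QP (v, 0)) := by
    have key : (LinearMap.mulRight ℝ ε').comp ((ι QP).comp (LinearMap.inl ℝ V W))
        = -((LinearMap.mulLeft ℝ ε').comp ((ι QP).comp (LinearMap.inl ℝ V W))) := by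
      apply e.toBasis.ext
      intro i
      simp only [LinearMap.comp_apply, LinearMap.neg_apply, LinearMap.mulRight_apply,
        LinearMap.mulLeft_apply, OrthonormalBasis.coe_toBasis, LinearMap.inl_apply]
      have hodd : Odd (L'.length - 1) := by
        have : (0:ℕ) < n := i.pos
        rw [hL'len, Nat.odd_iff]; omega
      rw [hε', aux_L2 QP L' hL'pair hL'1 ((e i), 0)
          (by rw [hL']; exact List.mem_ofFn.mpr ⟨i, rfl⟩),
        hodd.neg_one_pow, neg_one_smul]
    intro v
    have := congrFun (congrArg DFunLike.coe key) v
    simpa using this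
  -- (0, w) commutes with ε'
  have hcommw : ∀ w : W, ι QP (0, w) * ε' = ε' * ι QP (0, w) := by
    intro w
    have horth : ∀ x ∈ L', QP.IsOrtho x (0, w) := by
      intro x hx
      rw [hL'] at hx
      obtain ⟨i, rfl⟩ := List.mem_ofFn.mp hx
      rw [QuadraticMap.isOrtho_def]
      simp [hQPapply, Prod.mk_add_mk]
    have heven : Even L'.length := by rw [hL'len]; exact Nat.even_iff.mpr (by omega)
    rw [hε', aux_L1 QP L' (0, w) horth, heven.neg_one_pow, one_smul]
  -- the forward linear map
  set F : V × W →ₗ[ℝ] CliffordAlgebra Q ⊗[ℝ] CliffordAlgebra Q' :=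
    ((Algebra.TensorProduct.includeLeft :
        CliffordAlgebra Q →ₐ[ℝ] CliffordAlgebra Q ⊗[ℝ] CliffordAlgebra Q').toLinearMap.comp
      (ι Q)).comp (LinearMap.fst ℝ V W) +
    ((TensorProduct.mk ℝ (CliffordAlgebra Q) (CliffordAlgebra Q') ε).comp
      (ι Q')).comp (LinearMap.snd ℝ V W) with hF
  have hFapply : ∀ p : V × W, F p = ι Q p.1 ⊗ₜ[ℝ] 1 + ε ⊗ₜ[ℝ] ι Q' p.2 := by
    intro p
    simp [hF]
  have hFsq : ∀ p : V × W, F p * F p = algebraMap ℝ _ (QP p) := by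
    rintro ⟨v, w⟩
    rw [hFapply]
    have h1 : (ι Q v ⊗ₜ[ℝ] (1 : CliffordAlgebra Q') + ε ⊗ₜ[ℝ] ι Q' w) *
          (ι Q v ⊗ₜ[ℝ] (1 : CliffordAlgebra Q') + ε ⊗ₜ[ℝ] ι Q' w)
        = (ι Q v * ι Q v) ⊗ₜ[ℝ] 1 + (ι Q v * ε + ε * ι Q v) ⊗ₜ[ℝ] ι Q' w
            + (ε * ε) ⊗ₜ[ℝ] (ι Q' w * ι Q' w) := by
      simp only [add_mul, mul_add, Algebra.TensorProduct.tmul_mul_tmul, one_mul, mul_one,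
        TensorProduct.add_tmul]
      abel
    rw [h1, hanti v, neg_add_cancel, TensorProduct.zero_tmul, add_zero, ι_sq_scalar,
      ι_sq_scalar, hε2, hQPapply, map_add]
    have e1 := (Algebra.TensorProduct.includeLeft :
        CliffordAlgebra Q →ₐ[ℝ] CliffordAlgebra Q ⊗[ℝ] CliffordAlgebra Q').commutes (Q v)
    have e2 := (Algebra.TensorProduct.includeRight :
        CliffordAlgebra Q' →ₐ[ℝ] CliffordAlgebra Q ⊗[ℝ] CliffordAlgebra Q').commutes (Q' w)
    rw [Algebra.TensorProduct.includeLeft_apply] at e1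
    rw [Algebra.TensorProduct.includeRight_apply] at e2
    rw [e1, e2]
  set f0 : CliffordAlgebra QP →ₐ[ℝ] CliffordAlgebra Q ⊗[ℝ] CliffordAlgebra Q' :=
    CliffordAlgebra.lift QP ⟨F, hFsq⟩ with hf0
  have hf0ι : ∀ p : V × W, f0 (ι QP p) = ι Q p.1 ⊗ₜ[ℝ] 1 + ε ⊗ₜ[ℝ] ι Q' p.2 := by
    intro p
    rw [hf0, lift_ι_apply, hFapply]
  -- the two halves of the reverse map
  set g1 : CliffordAlgebra Q →ₐ[ℝ] CliffordAlgebra QP :=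
    CliffordAlgebra.map (QuadraticMap.Isometry.inl Q Q') with hg1
  have hg1ι : ∀ v : V, g1 (ι Q v) = ι QP (v, 0) := by
    intro v
    rw [hg1, CliffordAlgebra.map_apply_ι]
    rfl
  set G2 : W →ₗ[ℝ] CliffordAlgebra QP :=
    (LinearMap.mulLeft ℝ ε').comp ((ι QP).comp (LinearMap.inr ℝ V W)) with hG2
  have hG2apply : ∀ w : W, G2 w = ε' * ι QP (0, w) := by intro w; simp [hG2]
  have hG2sq : ∀ w : W, G2 w * G2 w = algebraMap ℝ _ (Q' w) := by
    intro w
    rw [hG2apply, mul_assoc, ← mul_assoc (ι QP (0, w)), hcommw w, mul_assoc, ← mul_assoc,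
      hε'2, one_mul, ι_sq_scalar, hQPapply]
    simp
  set g2 : CliffordAlgebra Q' →ₐ[ℝ] CliffordAlgebra QP :=
    CliffordAlgebra.lift Q' ⟨G2, hG2sq⟩ with hg2
  have hg2ι : ∀ w : W, g2 (ι Q' w) = ε' * ι QP (0, w) := by
    intro w
    rw [hg2, lift_ι_apply, hG2apply]
  -- images of g1, g2 commute
  have hcomm : ∀ (x : CliffordAlgebra Q) (y : CliffordAlgebra Q'),
      Commute (g1 x) (g2 y) := by
    intro x y
    induction x using CliffordAlgebra.induction with
    | algebraMap r =>
      rw [AlgHom.commutes]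
      exact Algebra.commutes r (g2 y)
    | mul a b ha hb => rw [map_mul]; exact ha.mul_left hb
    | add a b ha hb => rw [map_add]; exact ha.add_left hb
    | ι v =>
      induction y using CliffordAlgebra.induction with
      | algebraMap r =>
        rw [AlgHom.commutes]
        exact (Algebra.commutes r (g1 (ι Q v))).symm
      | mul a b ha hb => rw [map_mul]; exact ha.mul_right hb
      | add a b ha hb => rw [map_add]; exact ha.add_right hb
      | ι w =>
        rw [hg1ι, hg2ι]
        have hvw : QP.IsOrtho (v, 0) (0, w) := by
          rw [QuadraticMap.isOrtho_def]
          simp [hQPapply, Prod.mk_add_mk]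
        show ι QP (v, 0) * (ε' * ι QP (0, w)) = ε' * ι QP (0, w) * ι QP (v, 0)
        rw [← mul_assoc, hanti' v, neg_mul, mul_assoc, ι_mul_ι_comm_of_isOrtho hvw,
          mul_neg, neg_neg, ← mul_assoc]
  set g : CliffordAlgebra Q ⊗[ℝ] CliffordAlgebra Q' →ₐ[ℝ] CliffordAlgebra QP :=
    Algebra.TensorProduct.lift g1 g2 hcomm with hg
  have hgtmul : ∀ (x : CliffordAlgebra Q) (y : CliffordAlgebra Q'),
      g (x ⊗ₜ[ℝ] y) = g1 x * g2 y := by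
    intro x y
    rw [hg, Algebra.TensorProduct.lift_tmul]
  -- g1 ε = ε'
  have hg1ε : g1 ε = ε' := by
    rw [hε, map_list_prod, hε', hL', List.map_ofFn, List.map_ofFn]
    exact congrArg List.prod (congrArg List.ofFn (funext fun i => hg1ι (e i)))
  -- f0 ε' = ε ⊗ 1
  have hf0ε' : f0 ε' = ε ⊗ₜ[ℝ] 1 := by
    have key : f0 ε' = (Algebra.TensorProduct.includeLeft :
        CliffordAlgebra Q →ₐ[ℝ] CliffordAlgebra Q ⊗[ℝ] CliffordAlgebra Q') ε := by
      rw [hε', hε, map_list_prod, map_list_prod, hL', List.map_ofFn, List.map_ofFn,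
        List.map_ofFn]
      refine congrArg List.prod (congrArg List.ofFn (funext fun i => ?_))
      show f0 (ι QP (e i, 0)) = Algebra.TensorProduct.includeLeft (ι Q (e i))
      rw [hf0ι]
      simp
    rw [key, Algebra.TensorProduct.includeLeft_apply]
  -- f0 ∘ g = id
  have hfg : f0.comp g = AlgHom.id ℝ (CliffordAlgebra Q ⊗[ℝ] CliffordAlgebra Q') := by
    apply Algebra.TensorProduct.ext
    · apply CliffordAlgebra.hom_ext
      apply LinearMap.ext
      intro v
      show f0 (g (ι Q v ⊗ₜ[ℝ] 1)) = ι Q v ⊗ₜ[ℝ] 1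
      rw [hgtmul, map_one, mul_one, hg1ι, hf0ι]
      simp
    · apply CliffordAlgebra.hom_ext
      apply LinearMap.ext
      intro w
      show f0 (g ((1 : CliffordAlgebra Q) ⊗ₜ[ℝ] ι Q' w)) = (1 : CliffordAlgebra Q) ⊗ₜ[ℝ] ι Q' w
      rw [hgtmul, map_one, one_mul, hg2ι, map_mul, hf0ε', hf0ι]
      have : (ι Q (0 : V) ⊗ₜ[ℝ] (1 : CliffordAlgebra Q') + ε ⊗ₜ[ℝ] ι Q' w)
          = ε ⊗ₜ[ℝ] ι Q' w := by simp
      rw [this, Algebra.TensorProduct.tmul_mul_tmul, hε2, one_mul]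
  -- g ∘ f0 = id
  have hgf : g.comp f0 = AlgHom.id ℝ (CliffordAlgebra QP) := by
    apply CliffordAlgebra.hom_ext
    apply LinearMap.ext
    rintro ⟨v, w⟩
    show g (f0 (ι QP (v, w))) = ι QP (v, w)
    rw [hf0ι, map_add, hgtmul, hgtmul, map_one, mul_one, hg1ι, hg1ε, hg2ι, ← mul_assoc,
      hε'2, one_mul, ← map_add]
    congr 1
    simp [Prod.mk_add_mk]
  refine ⟨AlgEquiv.ofAlgHom f0 g hfg hgf, fun v w => ?_⟩
  show f0 (ι QP (v, w)) = ι Q v ⊗ₜ[ℝ] 1 + ε ⊗ₜ[ℝ] ι Q' w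
  rw [hf0ι]
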